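/- In every F-algebra, the identity ◇¬(x ∧ y) = ◇¬(x → y) holds, where ◇x := x ∧ ½. -/
import Mathlib


/-- An F-algebra: a centered Kleene algebra (distributive lattice with involutive
De Morgan negation satisfying the Kleene inequality, with center `½`) with an
implication satisfying (F1)–(F6), where `◇x := x ⊓ ½`. -/
class FAlgebra (A : Type*) extends DistribLattice A where
  neg : A → A
  half : A
  imp : A → A → A
  neg_neg : ∀ a : A, neg (neg a) = a
  neg_inf : ∀ a b : A, neg (a ⊓ b) = neg a ⊔ neg b
  kleene : ∀ a b : A, neg a ⊓ a ≤ neg b ⊔ b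
  neg_half : neg half = half
  f1 : ∀ x y : A, x ⊓ y = x ⊓ imp x y
  f2 : ∀ x y : A, imp x y ≤ (x ⊓ y) ⊔ half
  f3 : ∀ x y z : A, imp (x ⊓ y) z = imp x (imp y z)
  f4 : ∀ x y : A, half ≤ imp x (imp y y)
  f5 : ∀ x y : A, half ≤ imp (imp (imp x y) x) x
  f6 : ∀ x y : A, imp x y ⊓ half = imp (x ⊓ half) (y ⊓ half)

open FAlgebra

/-- in every F-algebra, `◇¬(x ⊓ y) = ◇¬(x → y)`, where `◇x := x ⊓ ½`. -/
theorem f_diamond_neg_inf_eq_diamond_neg_imp {A : Type*} [FAlgebra A] (x y : A) :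
    neg (x ⊓ y) ⊓ half = neg (imp x y) ⊓ half := by
  have negsup : ∀ a b : A, neg (a ⊔ b) = neg a ⊓ neg b := by
    intro a b
    have h : neg (neg a ⊓ neg b) = a ⊔ b := by rw [FAlgebra.neg_inf, FAlgebra.neg_neg, FAlgebra.neg_neg]
    rw [← h, FAlgebra.neg_neg]
  have key : (x ⊓ y) ⊔ half = imp x y ⊔ half := by
    apply le_antisymm
    · exact sup_le (le_sup_of_le_left (by rw [f1 x y]; exact inf_le_right)) le_sup_right
    · exact sup_le (le_trans (f2 x y) (sup_le (le_sup_left) le_sup_right)) le_sup_right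
  have := congrArg neg key
  rwa [negsup, negsup, neg_half] at this
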